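/- Let h, h_0 ∈ ℂ^K and x, x_0 ∈ ℂ^N with ‖h_0‖ = ‖x_0‖ = √d_0 > 0. Set α_1 = ⟨h_0,h⟩/d_0, α_2 = ⟨x_0,x⟩/d_0 (inner products conjugate-linear in the first argument), h̃ = h − α_1 h_0, x̃ = x − α_2 x_0, and δ = ‖h x* − h_0 x_0*‖_F/d_0, and assume δ < 1. Then: |α_1| ≤ ‖h‖/‖h_0‖; |α_1·conj(α_2) − 1| ≤ δ; ‖h̃‖ ≤ (δ/(1−δ))‖h‖; ‖x̃‖ ≤ (δ/(1−δ))‖x‖; and ‖h̃‖·‖x̃‖ ≤ δ²·d_0/(2(1−δ)). Moreover, for any matrix B ∈ ℂ^{L×K} and μ > 0, if ‖h‖ ≤ 2√d_0, √L‖Bh‖_∞ ≤ 4μ√d_0 and √L‖Bh_0‖_∞ ≤ μ√d_0, then √L‖Bh̃‖_∞ ≤ 6μ√d_0. -/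

import Mathlib

noncomputable section
open Finset ComplexConjugate

namespace RGD

/-- Squared Euclidean norm of a complex vector. -/
def vnormSq {n : ℕ} (v : Fin n → ℂ) : ℝ := ∑ j, ‖v j‖ ^ 2

/-- Euclidean norm of a complex vector. -/
def vnorm {n : ℕ} (v : Fin n → ℂ) : ℝ := Real.sqrt (vnormSq v)

/-- Inner product, conjugate-linear in the first argument. -/
def vinner {n : ℕ} (u v : Fin n → ℂ) : ℂ := ∑ j, conj (u j) * v j

/-- Squared Frobenius norm of a matrix. -/
def frobSq {K N : ℕ} (Z : Matrix (Fin K) (Fin N) ℂ) : ℝ := ∑ k, ∑ j, ‖Z k j‖ ^ 2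

/-- Frobenius norm of a matrix. -/
def frob {K N : ℕ} (Z : Matrix (Fin K) (Fin N) ℂ) : ℝ := Real.sqrt (frobSq Z)

/-- Frobenius inner product `⟨U,V⟩ = Tr(U*V)`, conjugate-linear in the first argument. -/
def finner {K N : ℕ} (U V : Matrix (Fin K) (Fin N) ℂ) : ℂ := ∑ k, ∑ j, conj (U k j) * V k j

/-- Spectral (operator) norm of a matrix: sup of `‖Zv‖` over the closed unit ball. -/
def opNorm {K N : ℕ} (Z : Matrix (Fin K) (Fin N) ℂ) : ℝ :=
  sSup {r : ℝ | ∃ v : Fin N → ℂ, vnorm v ≤ 1 ∧ r = vnorm (Z.mulVec v)}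

/-- Squared Frobenius norm of a block-diagonal matrix, given by its diagonal blocks. -/
def famFrobSq {K N s : ℕ} (Z : Fin s → Matrix (Fin K) (Fin N) ℂ) : ℝ := ∑ i, frobSq (Z i)

/-- Frobenius norm of a block-diagonal matrix, given by its diagonal blocks. -/
def famFrob {K N s : ℕ} (Z : Fin s → Matrix (Fin K) (Fin N) ℂ) : ℝ := Real.sqrt (famFrobSq Z)

/-- The rank-one matrix `u v*`. -/
def rankOne {K N : ℕ} (u : Fin K → ℂ) (v : Fin N → ℂ) : Matrix (Fin K) (Fin N) ℂ :=
  Matrix.of fun k j => u k * conj (v j)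

/-- `ℋ(h,x)`: block-diagonal matrix with `i`-th block `hᵢ xᵢ*`. -/
def Hmap {K N s : ℕ} (h : Fin s → Fin K → ℂ) (x : Fin s → Fin N → ℂ) :
    Fin s → Matrix (Fin K) (Fin N) ℂ := fun i => rankOne (h i) (x i)

/-- `𝒜ᵢ(Z) = (bₗ* Z aₗ)ₗ`. -/
def calAi {K N L : ℕ} (b : Fin L → Fin K → ℂ) (a : Fin L → Fin N → ℂ)
    (Z : Matrix (Fin K) (Fin N) ℂ) : Fin L → ℂ :=
  fun l => vinner (b l) (Z.mulVec (a l))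

/-- `𝒜(Z) = Σᵢ 𝒜ᵢ(Zᵢ)` on block-diagonal matrices. -/
def calA {K N L s : ℕ} (b : Fin L → Fin K → ℂ) (a : Fin s → Fin L → Fin N → ℂ)
    (Z : Fin s → Matrix (Fin K) (Fin N) ℂ) : Fin L → ℂ :=
  fun l => ∑ i, calAi b (a i) (Z i) l

/-- `𝒜ᵢ*(z) = Σₗ zₗ bₗ aₗ*`. -/
def calAdj {K N L : ℕ} (b : Fin L → Fin K → ℂ) (a : Fin L → Fin N → ℂ)
    (z : Fin L → ℂ) : Matrix (Fin K) (Fin N) ℂ :=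
  Matrix.of fun k j => ∑ l, z l * b l k * conj (a l j)

/-- `‖𝒜*(e)‖ = maxᵢ ‖𝒜ᵢ*(e)‖` (operator norms). -/
def AadjNorm {K N L s : ℕ} (b : Fin L → Fin K → ℂ) (a : Fin s → Fin L → Fin N → ℂ)
    (e : Fin L → ℂ) : ℝ :=
  ⨆ i : Fin s, opNorm (calAdj b (a i) e)

/-- `B*B = I_K`, expressed in terms of the columns `bₗ` of `B*`. -/
def BtBeqI {K L : ℕ} (b : Fin L → Fin K → ℂ) : Prop :=
  ∀ k k' : Fin K, (∑ l, b l k * conj (b l k')) = if k = k' then (1 : ℂ) else 0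

/-- `μ ≥ μ_h`, i.e. `√L ‖B h_{i0}‖_∞ ≤ μ ‖h_{i0}‖` for all `i`. -/
def muhLe {K L s : ℕ} (b : Fin L → Fin K → ℂ) (h0 : Fin s → Fin K → ℂ) (μ : ℝ) : Prop :=
  ∀ i l, Real.sqrt L * ‖vinner (b l) (h0 i)‖ ≤ μ * vnorm (h0 i)

/-- `d₀ = √(Σᵢ d_{i0}²)`. -/
def dtot {s : ℕ} (d0 : Fin s → ℝ) : ℝ := Real.sqrt (∑ i, d0 i ^ 2)

/-- Condition number `κ = (maxᵢ d_{i0}) / (minᵢ d_{i0})`. -/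
def kappa {s : ℕ} (d0 : Fin s → ℝ) : ℝ := (⨆ i, d0 i) / (⨅ i, d0 i)

/-- The observation `y = 𝒜(ℋ(h₀,x₀)) + e`. -/
def yvec {K N L s : ℕ} (b : Fin L → Fin K → ℂ) (a : Fin s → Fin L → Fin N → ℂ)
    (h0 : Fin s → Fin K → ℂ) (x0 : Fin s → Fin N → ℂ) (e : Fin L → ℂ) : Fin L → ℂ :=
  fun l => calA b a (Hmap h0 x0) l + e l

/-- `F(h,x) = ‖𝒜(ℋ(h,x)) − y‖²`. -/
def Fobj {K N L s : ℕ} (b : Fin L → Fin K → ℂ) (a : Fin s → Fin L → Fin N → ℂ)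
    (h0 : Fin s → Fin K → ℂ) (x0 : Fin s → Fin N → ℂ) (e : Fin L → ℂ)
    (h : Fin s → Fin K → ℂ) (x : Fin s → Fin N → ℂ) : ℝ :=
  vnormSq (fun l => calA b a (Hmap h x) l - yvec b a h0 x0 e l)

def G0 (z : ℝ) : ℝ := max (z - 1) 0 ^ 2

def G0' (z : ℝ) : ℝ := 2 * max (z - 1) 0

/-- The `i`-th regularizer `Gᵢ(hᵢ,xᵢ)` (including the factor `ρ`). -/
def Gi {K N L : ℕ} (b : Fin L → Fin K → ℂ) (ρ μ di : ℝ)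
    (hi : Fin K → ℂ) (xi : Fin N → ℂ) : ℝ :=
  ρ * (G0 (vnormSq hi / (2 * di)) + G0 (vnormSq xi / (2 * di))
    + ∑ l, G0 ((L : ℝ) * ‖vinner (b l) hi‖ ^ 2 / (8 * di * μ ^ 2)))

/-- The regularizer `G(h,x) = Σᵢ Gᵢ(hᵢ,xᵢ)`. -/
def Greg {K N L s : ℕ} (b : Fin L → Fin K → ℂ) (ρ μ : ℝ) (dd : Fin s → ℝ)
    (h : Fin s → Fin K → ℂ) (x : Fin s → Fin N → ℂ) : ℝ :=
  ∑ i, Gi b ρ μ (dd i) (h i) (x i)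

/-- `F̃ = F + G`. -/
def Ftil {K N L s : ℕ} (b : Fin L → Fin K → ℂ) (a : Fin s → Fin L → Fin N → ℂ)
    (h0 : Fin s → Fin K → ℂ) (x0 : Fin s → Fin N → ℂ) (e : Fin L → ℂ)
    (ρ μ : ℝ) (dd : Fin s → ℝ)
    (h : Fin s → Fin K → ℂ) (x : Fin s → Fin N → ℂ) : ℝ :=
  Fobj b a h0 x0 e h x + Greg b ρ μ dd h x

/-- The residual `𝒜(ℋ(h,x)) − y`. -/
def residual {K N L s : ℕ} (b : Fin L → Fin K → ℂ) (a : Fin s → Fin L → Fin N → ℂ)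
    (h0 : Fin s → Fin K → ℂ) (x0 : Fin s → Fin N → ℂ) (e : Fin L → ℂ)
    (h : Fin s → Fin K → ℂ) (x : Fin s → Fin N → ℂ) : Fin L → ℂ :=
  fun l => calA b a (Hmap h x) l - yvec b a h0 x0 e l

/-- Wirtinger gradient `∇F_{hᵢ} = 𝒜ᵢ*(𝒜(ℋ(h,x)) − y) xᵢ`. -/
def gradFh {K N L s : ℕ} (b : Fin L → Fin K → ℂ) (a : Fin s → Fin L → Fin N → ℂ)
    (h0 : Fin s → Fin K → ℂ) (x0 : Fin s → Fin N → ℂ) (e : Fin L → ℂ)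
    (h : Fin s → Fin K → ℂ) (x : Fin s → Fin N → ℂ) (i : Fin s) : Fin K → ℂ :=
  (calAdj b (a i) (residual b a h0 x0 e h x)).mulVec (x i)

/-- Wirtinger gradient `∇F_{xᵢ} = (𝒜ᵢ*(𝒜(ℋ(h,x)) − y))* hᵢ`. -/
def gradFx {K N L s : ℕ} (b : Fin L → Fin K → ℂ) (a : Fin s → Fin L → Fin N → ℂ)
    (h0 : Fin s → Fin K → ℂ) (x0 : Fin s → Fin N → ℂ) (e : Fin L → ℂ)
    (h : Fin s → Fin K → ℂ) (x : Fin s → Fin N → ℂ) (i : Fin s) : Fin N → ℂ :=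
  (calAdj b (a i) (residual b a h0 x0 e h x)).conjTranspose.mulVec (h i)

/-- Wirtinger gradient `∇G_{hᵢ}`. -/
def gradGh {K L s : ℕ} (b : Fin L → Fin K → ℂ) (ρ μ : ℝ) (dd : Fin s → ℝ)
    (h : Fin s → Fin K → ℂ) (i : Fin s) : Fin K → ℂ :=
  fun k => ((ρ / (2 * dd i) : ℝ) : ℂ) *
    (((G0' (vnormSq (h i) / (2 * dd i)) : ℝ) : ℂ) * h i k
      + (((L : ℝ) / (4 * μ ^ 2) : ℝ) : ℂ) *
        ∑ l, ((G0' ((L : ℝ) * ‖vinner (b l) (h i)‖ ^ 2 / (8 * dd i * μ ^ 2)) : ℝ) : ℂ)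
          * (vinner (b l) (h i) * b l k))

/-- Wirtinger gradient `∇G_{xᵢ}`. -/
def gradGx {N s : ℕ} (ρ : ℝ) (dd : Fin s → ℝ)
    (x : Fin s → Fin N → ℂ) (i : Fin s) : Fin N → ℂ :=
  fun j => ((ρ / (2 * dd i) : ℝ) : ℂ) * (((G0' (vnormSq (x i) / (2 * dd i)) : ℝ) : ℂ) * x i j)

/-- `∇F̃_{hᵢ} = ∇F_{hᵢ} + ∇G_{hᵢ}`. -/
def gradH {K N L s : ℕ} (b : Fin L → Fin K → ℂ) (a : Fin s → Fin L → Fin N → ℂ)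
    (h0 : Fin s → Fin K → ℂ) (x0 : Fin s → Fin N → ℂ) (e : Fin L → ℂ)
    (ρ μ : ℝ) (dd : Fin s → ℝ)
    (h : Fin s → Fin K → ℂ) (x : Fin s → Fin N → ℂ) (i : Fin s) : Fin K → ℂ :=
  fun k => gradFh b a h0 x0 e h x i k + gradGh b ρ μ dd h i k

/-- `∇F̃_{xᵢ} = ∇F_{xᵢ} + ∇G_{xᵢ}`. -/
def gradX {K N L s : ℕ} (b : Fin L → Fin K → ℂ) (a : Fin s → Fin L → Fin N → ℂ)
    (h0 : Fin s → Fin K → ℂ) (x0 : Fin s → Fin N → ℂ) (e : Fin L → ℂ)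
    (ρ μ : ℝ) (dd : Fin s → ℝ)
    (h : Fin s → Fin K → ℂ) (x : Fin s → Fin N → ℂ) (i : Fin s) : Fin N → ℂ :=
  fun j => gradFx b a h0 x0 e h x i j + gradGx ρ dd x i j

/-- `‖∇F̃(h,x)‖²` (squared norm of the stacked Wirtinger gradient). -/
def gradNormSq {K N L s : ℕ} (b : Fin L → Fin K → ℂ) (a : Fin s → Fin L → Fin N → ℂ)
    (h0 : Fin s → Fin K → ℂ) (x0 : Fin s → Fin N → ℂ) (e : Fin L → ℂ)
    (ρ μ : ℝ) (dd : Fin s → ℝ)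
    (h : Fin s → Fin K → ℂ) (x : Fin s → Fin N → ℂ) : ℝ :=
  ∑ i, vnormSq (gradH b a h0 x0 e ρ μ dd h x i) + ∑ i, vnormSq (gradX b a h0 x0 e ρ μ dd h x i)

/-- `‖∇F̃(h',x') − ∇F̃(h,x)‖²`. -/
def gradDiffNormSq {K N L s : ℕ} (b : Fin L → Fin K → ℂ) (a : Fin s → Fin L → Fin N → ℂ)
    (h0 : Fin s → Fin K → ℂ) (x0 : Fin s → Fin N → ℂ) (e : Fin L → ℂ)
    (ρ μ : ℝ) (dd : Fin s → ℝ)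
    (h : Fin s → Fin K → ℂ) (x : Fin s → Fin N → ℂ)
    (h' : Fin s → Fin K → ℂ) (x' : Fin s → Fin N → ℂ) : ℝ :=
  ∑ i, vnormSq (fun k => gradH b a h0 x0 e ρ μ dd h' x' i k - gradH b a h0 x0 e ρ μ dd h x i k)
  + ∑ i, vnormSq (fun j => gradX b a h0 x0 e ρ μ dd h' x' i j - gradX b a h0 x0 e ρ μ dd h x i j)

/-- Membership in `𝒩_d`. -/
def inNd {K N s : ℕ} (d0 : Fin s → ℝ)
    (h : Fin s → Fin K → ℂ) (x : Fin s → Fin N → ℂ) : Prop :=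
  ∀ i, vnorm (h i) ≤ 2 * Real.sqrt (d0 i) ∧ vnorm (x i) ≤ 2 * Real.sqrt (d0 i)

/-- Membership in `𝒩_μ`. -/
def inNmu {K L s : ℕ} (b : Fin L → Fin K → ℂ) (d0 : Fin s → ℝ) (μ : ℝ)
    (h : Fin s → Fin K → ℂ) : Prop :=
  ∀ i, ∀ l, Real.sqrt L * ‖vinner (b l) (h i)‖ ≤ 4 * Real.sqrt (d0 i) * μ

/-- `δᵢ(hᵢ,xᵢ) = ‖hᵢxᵢ* − h_{i0}x_{i0}*‖_F / d_{i0}`. -/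
def deltaI {K N : ℕ} (h0i : Fin K → ℂ) (x0i : Fin N → ℂ) (d0i : ℝ)
    (hi : Fin K → ℂ) (xi : Fin N → ℂ) : ℝ :=
  frob (rankOne hi xi - rankOne h0i x0i) / d0i

/-- Membership in `𝒩_ε`. -/
def inNeps {K N s : ℕ} (h0 : Fin s → Fin K → ℂ) (x0 : Fin s → Fin N → ℂ)
    (d0 : Fin s → ℝ) (ε : ℝ)
    (h : Fin s → Fin K → ℂ) (x : Fin s → Fin N → ℂ) : Prop :=
  ∀ i, deltaI (h0 i) (x0 i) (d0 i) (h i) (x i) ≤ ε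

/-- The global relative error `δ(h,x) = ‖ℋ(h,x) − X₀‖_F / d₀`. -/
def deltaTot {K N s : ℕ} (h0 : Fin s → Fin K → ℂ) (x0 : Fin s → Fin N → ℂ)
    (d0 : Fin s → ℝ)
    (h : Fin s → Fin K → ℂ) (x : Fin s → Fin N → ℂ) : ℝ :=
  famFrob (fun i => Hmap h x i - Hmap h0 x0 i) / dtot d0

/-- Membership in `𝒩_F̃`. -/
def inNF {K N L s : ℕ} (b : Fin L → Fin K → ℂ) (a : Fin s → Fin L → Fin N → ℂ)
    (h0 : Fin s → Fin K → ℂ) (x0 : Fin s → Fin N → ℂ) (e : Fin L → ℂ)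
    (d0 : Fin s → ℝ) (ρ μ : ℝ) (dd : Fin s → ℝ) (ε : ℝ)
    (h : Fin s → Fin K → ℂ) (x : Fin s → Fin N → ℂ) : Prop :=
  Ftil b a h0 x0 e ρ μ dd h x ≤ ε ^ 2 * dtot d0 ^ 2 / (3 * (s : ℝ) * kappa d0 ^ 2) + vnormSq e

/-- The Local Restricted Isometry Property on `𝒩_d ∩ 𝒩_μ ∩ 𝒩_ε`. -/
def LocalRIP {K N L s : ℕ} (b : Fin L → Fin K → ℂ) (a : Fin s → Fin L → Fin N → ℂ)
    (h0 : Fin s → Fin K → ℂ) (x0 : Fin s → Fin N → ℂ)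
    (d0 : Fin s → ℝ) (μ ε : ℝ) : Prop :=
  ∀ (h : Fin s → Fin K → ℂ) (x : Fin s → Fin N → ℂ),
    inNd d0 h x → inNmu b d0 μ h → inNeps h0 x0 d0 ε h x →
      (2 / 3) * famFrobSq (fun i => Hmap h x i - Hmap h0 x0 i)
          ≤ vnormSq (calA b a fun i => Hmap h x i - Hmap h0 x0 i)
      ∧ vnormSq (calA b a fun i => Hmap h x i - Hmap h0 x0 i)
          ≤ (3 / 2) * famFrobSq (fun i => Hmap h x i - Hmap h0 x0 i)

/-- `α_{i1} = ⟨h_{i0}, hᵢ⟩ / d_{i0}`. -/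
def alpha1 {K s : ℕ} (h0 : Fin s → Fin K → ℂ) (d0 : Fin s → ℝ)
    (h : Fin s → Fin K → ℂ) (i : Fin s) : ℂ :=
  vinner (h0 i) (h i) / ((d0 i : ℝ) : ℂ)

/-- `α_{i2} = ⟨x_{i0}, xᵢ⟩ / d_{i0}`. -/
def alpha2 {N s : ℕ} (x0 : Fin s → Fin N → ℂ) (d0 : Fin s → ℝ)
    (x : Fin s → Fin N → ℂ) (i : Fin s) : ℂ :=
  vinner (x0 i) (x i) / ((d0 i : ℝ) : ℂ)

/-- `δ₀ = δ/10`. -/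
def delta0 {K N s : ℕ} (h0 : Fin s → Fin K → ℂ) (x0 : Fin s → Fin N → ℂ)
    (d0 : Fin s → ℝ) (h : Fin s → Fin K → ℂ) (x : Fin s → Fin N → ℂ) : ℝ :=
  deltaTot h0 x0 d0 h x / 10

/-- `αᵢ = (1−δ₀)α_{i1}` if `‖hᵢ‖ ≥ ‖xᵢ‖`, else `1/((1−δ₀) conj(α_{i2}))`. -/
def alphaC {K N s : ℕ} (h0 : Fin s → Fin K → ℂ) (x0 : Fin s → Fin N → ℂ)
    (d0 : Fin s → ℝ) (h : Fin s → Fin K → ℂ) (x : Fin s → Fin N → ℂ) (i : Fin s) : ℂ :=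
  if vnorm (x i) ≤ vnorm (h i)
  then ((1 - delta0 h0 x0 d0 h x : ℝ) : ℂ) * alpha1 h0 d0 h i
  else 1 / (((1 - delta0 h0 x0 d0 h x : ℝ) : ℂ) * conj (alpha2 x0 d0 x i))

/-- `Δhᵢ = hᵢ − αᵢ h_{i0}`. -/
def dh {K N s : ℕ} (h0 : Fin s → Fin K → ℂ) (x0 : Fin s → Fin N → ℂ)
    (d0 : Fin s → ℝ) (h : Fin s → Fin K → ℂ) (x : Fin s → Fin N → ℂ) (i : Fin s) :
    Fin K → ℂ :=
  fun k => h i k - alphaC h0 x0 d0 h x i * h0 i k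

/-- `Δxᵢ = xᵢ − conj(αᵢ)⁻¹ x_{i0}`. -/
def dx {K N s : ℕ} (h0 : Fin s → Fin K → ℂ) (x0 : Fin s → Fin N → ℂ)
    (d0 : Fin s → ℝ) (h : Fin s → Fin K → ℂ) (x : Fin s → Fin N → ℂ) (i : Fin s) :
    Fin N → ℂ :=
  fun j => x i j - (conj (alphaC h0 x0 d0 h x i))⁻¹ * x0 i j

/-- `σ²_max(h,x) = maxₗ Σᵢ |bₗ*hᵢ|² ‖xᵢ‖²`. -/
def sigmaMaxSq {K N L s : ℕ} (b : Fin L → Fin K → ℂ)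
    (h : Fin s → Fin K → ℂ) (x : Fin s → Fin N → ℂ) : ℝ :=
  ⨆ l : Fin L, ∑ i, ‖vinner (b l) (h i)‖ ^ 2 * vnormSq (x i)

/-- The rank-one bound (Lemma: `𝒜` on block-diagonal matrices with rank-1 blocks). -/
def RankOneBound {K N L s : ℕ} (b : Fin L → Fin K → ℂ)
    (a : Fin s → Fin L → Fin N → ℂ) : Prop :=
  ∀ (h : Fin s → Fin K → ℂ) (x : Fin s → Fin N → ℂ),
    vnormSq (calA b a (Hmap h x)) ≤
      4 / 3 * famFrobSq (Hmap h x)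
      + 2 * Real.sqrt (2 * (s : ℝ) * famFrobSq (Hmap h x) * sigmaMaxSq b h x
          * ((K : ℝ) + N) * Real.log L)
      + 8 * (s : ℝ) * sigmaMaxSq b h x * ((K : ℝ) + N) * Real.log L

/-- The subspace `Tᵢ = {h_{i0} v* + u x_{i0}*}`. -/
def Tspace {K N : ℕ} (h0i : Fin K → ℂ) (x0i : Fin N → ℂ) :
    Set (Matrix (Fin K) (Fin N) ℂ) :=
  {Z | ∃ (u : Fin K → ℂ) (v : Fin N → ℂ), Z = rankOne h0i v + rankOne u x0i}

/-- `P` is the orthogonal projection onto `Tᵢ` w.r.t. the Frobenius inner product. -/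
def IsFrobProj {K N : ℕ} (h0i : Fin K → ℂ) (x0i : Fin N → ℂ)
    (P : Matrix (Fin K) (Fin N) ℂ → Matrix (Fin K) (Fin N) ℂ) : Prop :=
  ∀ Z, P Z ∈ Tspace h0i x0i ∧ ∀ W ∈ Tspace h0i x0i, finner W (Z - P Z) = 0

/-- Operator norm of `𝒜ᵢ` from `(ℂ^{K×N}, ‖·‖_F)` to `(ℂ^L, ‖·‖)`. -/
def calAiOpNorm {K N L : ℕ} (b : Fin L → Fin K → ℂ) (a : Fin L → Fin N → ℂ) : ℝ :=
  sSup {r : ℝ | ∃ Z : Matrix (Fin K) (Fin N) ℂ, frob Z ≤ 1 ∧ r = vnorm (calAi b a Z)}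

/-- Operator norm of `𝒜` from block-diagonal matrices with `‖·‖_F` to `ℂ^L`. -/
def calAOpNorm {K N L s : ℕ} (b : Fin L → Fin K → ℂ)
    (a : Fin s → Fin L → Fin N → ℂ) : ℝ :=
  sSup {r : ℝ | ∃ Z : Fin s → Matrix (Fin K) (Fin N) ℂ, famFrob Z ≤ 1 ∧ r = vnorm (calA b a Z)}

/-- Norm of a stacked vector in `ℂ^{ns}`. -/
def stackNorm {n s : ℕ} (u : Fin s → Fin n → ℂ) : ℝ := Real.sqrt (∑ i, vnormSq (u i))

/-- Norm of a point `z = (h,x) ∈ ℂ^{s(K+N)}`. -/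
def pairNorm {K N s : ℕ} (u : Fin s → Fin K → ℂ) (v : Fin s → Fin N → ℂ) : ℝ :=
  Real.sqrt (∑ i, vnormSq (u i) + ∑ i, vnormSq (v i))

/-- `z + t • w` componentwise, `t` real. -/
def shiftV {n s : ℕ} (u w : Fin s → Fin n → ℂ) (t : ℝ) : Fin s → Fin n → ℂ :=
  fun i k => u i k + (t : ℂ) * w i k

/-- `σ_max(h) = maxₗ √(Σᵢ |bₗ*hᵢ|²)` (unit `xᵢ`'s). -/
def sigmaMaxU {K L s : ℕ} (b : Fin L → Fin K → ℂ) (h : Fin s → Fin K → ℂ) : ℝ :=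
  ⨆ l, Real.sqrt (∑ i, ‖vinner (b l) (h i)‖ ^ 2)


/-! ### Auxiliary lemmas for statement17 -/

lemma norm_sq_add_c (a b : ℂ) : ‖a + b‖^2 = ‖a‖^2 + ‖b‖^2 + 2 * (conj a * b).re := by
  have h := Complex.normSq_add a b
  simp [← Complex.normSq_eq_norm_sq, h]

lemma vnormSq_nonneg' {n : ℕ} (v : Fin n → ℂ) : 0 ≤ vnormSq v :=
  Finset.sum_nonneg fun _ _ => by positivity

lemma vnorm_nonneg' {n : ℕ} (v : Fin n → ℂ) : 0 ≤ vnorm v := Real.sqrt_nonneg _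

lemma vnorm_sq' {n : ℕ} (v : Fin n → ℂ) : vnorm v ^ 2 = vnormSq v :=
  Real.sq_sqrt (vnormSq_nonneg' v)

lemma frobSq_nonneg' {K N : ℕ} (Z : Matrix (Fin K) (Fin N) ℂ) : 0 ≤ frobSq Z :=
  Finset.sum_nonneg fun _ _ => Finset.sum_nonneg fun _ _ => by positivity

lemma frob_sq' {K N : ℕ} (Z : Matrix (Fin K) (Fin N) ℂ) : frob Z ^ 2 = frobSq Z :=
  Real.sq_sqrt (frobSq_nonneg' Z)

lemma vinner_self' {n : ℕ} (v : Fin n → ℂ) : vinner v v = (vnormSq v : ℝ) := by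
  simp only [vinner, vnormSq]
  push_cast
  refine Finset.sum_congr rfl fun j _ => ?_
  rw [Complex.conj_mul']

lemma vinner_conj' {n : ℕ} (u v : Fin n → ℂ) : vinner u v = conj (vinner v u) := by
  simp [vinner, map_sum, map_mul, mul_comm]

lemma vinner_sub_smul {n : ℕ} (u v w : Fin n → ℂ) (c : ℂ) :
    vinner u (fun j => v j - c * w j) = vinner u v - c * vinner u w := by
  simp only [vinner, mul_sub, Finset.sum_sub_distrib, Finset.mul_sum]
  congr 1
  exact Finset.sum_congr rfl fun j _ => by ring

lemma vinner_smul_right' {n : ℕ} (c : ℂ) (u v : Fin n → ℂ) :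
    vinner u (fun j => c * v j) = c * vinner u v := by
  simp [vinner, Finset.mul_sum, mul_left_comm]

lemma vnormSq_add_of {n : ℕ} (u v : Fin n → ℂ) (h : vinner u v = 0) :
    vnormSq (fun j => u j + v j) = vnormSq u + vnormSq v := by
  have hre : (vinner u v).re = 0 := by rw [h]; rfl
  simp only [vnormSq]
  have e : ∀ j, ‖u j + v j‖^2 = ‖u j‖^2 + ‖v j‖^2 + 2 * (conj (u j) * v j).re :=
    fun j => norm_sq_add_c _ _
  rw [Finset.sum_congr rfl fun j _ => e j]
  rw [Finset.sum_add_distrib, Finset.sum_add_distrib]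
  have e2 : ∑ j, 2 * (conj (u j) * v j).re = 2 * (vinner u v).re := by
    rw [← Finset.mul_sum, vinner, Complex.re_sum]
  rw [e2, hre]
  ring

lemma vnormSq_smul' {n : ℕ} (c : ℂ) (v : Fin n → ℂ) :
    vnormSq (fun j => c * v j) = ‖c‖^2 * vnormSq v := by
  simp [vnormSq, norm_mul, mul_pow, Finset.mul_sum]

lemma finner_add_right' {K N : ℕ} (A B C : Matrix (Fin K) (Fin N) ℂ) :
    finner A (B + C) = finner A B + finner A C := by
  simp [finner, Matrix.add_apply, mul_add, Finset.sum_add_distrib]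

lemma frobSq_add_of {K N : ℕ} (A B : Matrix (Fin K) (Fin N) ℂ) (h : finner A B = 0) :
    frobSq (A + B) = frobSq A + frobSq B := by
  have hre : (finner A B).re = 0 := by rw [h]; rfl
  simp only [frobSq, Matrix.add_apply]
  have e1 : ∀ k j, ‖A k j + B k j‖^2 = ‖A k j‖^2 + ‖B k j‖^2 + 2 * (conj (A k j) * B k j).re :=
    fun k j => norm_sq_add_c _ _
  calc (∑ k, ∑ j, ‖A k j + B k j‖^2)
      = ∑ k, ∑ j, (‖A k j‖^2 + ‖B k j‖^2 + 2 * (conj (A k j) * B k j).re) := by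
        refine Finset.sum_congr rfl fun k _ => Finset.sum_congr rfl fun j _ => e1 k j
    _ = (∑ k, ∑ j, ‖A k j‖^2) + (∑ k, ∑ j, ‖B k j‖^2) + 2 * (finner A B).re := by
        simp only [Finset.sum_add_distrib, Finset.mul_sum, finner, Complex.re_sum]
    _ = frobSq A + frobSq B := by rw [hre]; simp [frobSq]

lemma finner_smul_rankOne {K N : ℕ} (c d : ℂ) (u u' : Fin K → ℂ) (v v' : Fin N → ℂ) :
    finner (c • rankOne u v) (d • rankOne u' v')
      = conj c * d * (vinner u u' * conj (vinner v v')) := by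
  have e : ∀ (k : Fin K) (j : Fin N),
      conj ((c • rankOne u v) k j) * ((d • rankOne u' v') k j)
        = (conj c * d) * ((conj (u k) * u' k) * (v j * conj (v' j))) := by
    intro k j
    simp only [Matrix.smul_apply, rankOne, Matrix.of_apply, smul_eq_mul, map_mul,
      Complex.conj_conj]
    ring
  calc finner (c • rankOne u v) (d • rankOne u' v')
      = ∑ k, ∑ j, (conj c * d) * ((conj (u k) * u' k) * (v j * conj (v' j))) := by
        refine Finset.sum_congr rfl fun k _ => Finset.sum_congr rfl fun j _ => e k j
    _ = (conj c * d) * ((∑ k, conj (u k) * u' k) * (∑ j, v j * conj (v' j))) := by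
        rw [Finset.sum_mul_sum, Finset.mul_sum]
        refine Finset.sum_congr rfl fun k _ => ?_
        rw [Finset.mul_sum]
    _ = conj c * d * (vinner u u' * conj (vinner v v')) := by
        rw [vinner, vinner, map_sum]
        congr 2
        refine Finset.sum_congr rfl fun j _ => ?_
        rw [map_mul, Complex.conj_conj]

lemma frobSq_smul_rankOne {K N : ℕ} (c : ℂ) (u : Fin K → ℂ) (v : Fin N → ℂ) :
    frobSq (c • rankOne u v) = ‖c‖^2 * (vnormSq u * vnormSq v) := by
  calc frobSq (c • rankOne u v)
      = ∑ k, ∑ j, ‖c‖^2 * (‖u k‖^2 * ‖v j‖^2) := by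
        refine Finset.sum_congr rfl fun k _ => Finset.sum_congr rfl fun j _ => ?_
        simp [rankOne, Matrix.smul_apply, smul_eq_mul, norm_mul, mul_pow]
    _ = ‖c‖^2 * ((∑ k, ‖u k‖^2) * (∑ j, ‖v j‖^2)) := by
        rw [Finset.sum_mul_sum, Finset.mul_sum]
        refine Finset.sum_congr rfl fun k _ => ?_
        rw [Finset.mul_sum]
    _ = ‖c‖^2 * (vnormSq u * vnormSq v) := rfl

lemma le_of_sq_le_sq' {a b : ℝ} (ha : 0 ≤ a) (hb : 0 ≤ b) (h : a^2 ≤ b^2) : a ≤ b := by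
  have h2 := Real.sqrt_le_sqrt h
  rwa [Real.sqrt_sq ha, Real.sqrt_sq hb] at h2

set_option maxHeartbeats 1000000 in
/-- rank-one perturbation bounds (Lemma 5.9). -/
theorem statement17
    {K N L : ℕ} (hK : 0 < K) (hN : 0 < N) (hL : 0 < L)
    (h h0 : Fin K → ℂ) (x x0 : Fin N → ℂ) (d0 : ℝ) (hd0 : 0 < d0)
    (hh0 : vnorm h0 = Real.sqrt d0) (hx0 : vnorm x0 = Real.sqrt d0)
    (hδ : deltaI h0 x0 d0 h x < 1) :
    ‖vinner h0 h / ((d0 : ℝ) : ℂ)‖ ≤ vnorm h / vnorm h0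
    ∧ ‖vinner h0 h / ((d0 : ℝ) : ℂ) * conj (vinner x0 x / ((d0 : ℝ) : ℂ)) - 1‖
        ≤ deltaI h0 x0 d0 h x
    ∧ vnorm (fun k => h k - vinner h0 h / ((d0 : ℝ) : ℂ) * h0 k)
        ≤ deltaI h0 x0 d0 h x / (1 - deltaI h0 x0 d0 h x) * vnorm h
    ∧ vnorm (fun j => x j - vinner x0 x / ((d0 : ℝ) : ℂ) * x0 j)
        ≤ deltaI h0 x0 d0 h x / (1 - deltaI h0 x0 d0 h x) * vnorm x
    ∧ vnorm (fun k => h k - vinner h0 h / ((d0 : ℝ) : ℂ) * h0 k)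
        * vnorm (fun j => x j - vinner x0 x / ((d0 : ℝ) : ℂ) * x0 j)
        ≤ deltaI h0 x0 d0 h x ^ 2 * d0 / (2 * (1 - deltaI h0 x0 d0 h x))
    ∧ (∀ (B : Matrix (Fin L) (Fin K) ℂ) (μ : ℝ), 0 < μ →
        vnorm h ≤ 2 * Real.sqrt d0 →
        (∀ l, Real.sqrt L * ‖B.mulVec h l‖ ≤ 4 * μ * Real.sqrt d0) →
        (∀ l, Real.sqrt L * ‖B.mulVec h0 l‖ ≤ μ * Real.sqrt d0) →
        ∀ l, Real.sqrt L *
            ‖B.mulVec (fun k => h k - vinner h0 h / ((d0 : ℝ) : ℂ) * h0 k) l‖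
          ≤ 6 * μ * Real.sqrt d0) := by
  set δ := deltaI h0 x0 d0 h x with hδeq
  set α1 : ℂ := vinner h0 h / ((d0 : ℝ) : ℂ) with hα1
  set α2 : ℂ := vinner x0 x / ((d0 : ℝ) : ℂ) with hα2
  set ht : Fin K → ℂ := fun k => h k - α1 * h0 k with hht
  set xt : Fin N → ℂ := fun j => x j - α2 * x0 j with hxt
  have hd0c : ((d0 : ℝ) : ℂ) ≠ 0 := Complex.ofReal_ne_zero.mpr hd0.ne'
  have hh0sq : vnormSq h0 = d0 := by
    have h1 := vnorm_sq' h0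
    rw [hh0, Real.sq_sqrt hd0.le] at h1; exact h1.symm
  have hx0sq : vnormSq x0 = d0 := by
    have h1 := vnorm_sq' x0
    rw [hx0, Real.sq_sqrt hd0.le] at h1; exact h1.symm
  have hvh0 : vinner h0 h0 = ((d0 : ℝ) : ℂ) := by rw [vinner_self', hh0sq]
  have hvx0 : vinner x0 x0 = ((d0 : ℝ) : ℂ) := by rw [vinner_self', hx0sq]
  have horth : vinner h0 ht = 0 := by
    rw [hht, vinner_sub_smul, hvh0, hα1]; field_simp; ring
  have xorth : vinner x0 xt = 0 := by
    rw [hxt, vinner_sub_smul, hvx0, hα2]; field_simp; ring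
  have horth' : vinner ht h0 = 0 := by rw [vinner_conj', horth, map_zero]
  have xorth' : vinner xt x0 = 0 := by rw [vinner_conj', xorth, map_zero]
  have hxsplit : vnormSq x = vnormSq xt + ‖α2‖^2 * d0 := by
    have hxe : x = fun j => xt j + α2 * x0 j := by funext j; rw [hxt]; ring
    calc vnormSq x = vnormSq (fun j => xt j + α2 * x0 j) := by rw [← hxe]
      _ = vnormSq xt + vnormSq (fun j => α2 * x0 j) := by
          apply vnormSq_add_of
          rw [vinner_smul_right', xorth', mul_zero]
      _ = vnormSq xt + ‖α2‖^2 * d0 := by rw [vnormSq_smul', hx0sq]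
  have hhsplit : vnormSq h = vnormSq ht + ‖α1‖^2 * d0 := by
    have hhe : h = fun k => ht k + α1 * h0 k := by funext k; rw [hht]; ring
    calc vnormSq h = vnormSq (fun k => ht k + α1 * h0 k) := by rw [← hhe]
      _ = vnormSq ht + vnormSq (fun k => α1 * h0 k) := by
          apply vnormSq_add_of
          rw [vinner_smul_right', horth', mul_zero]
      _ = vnormSq ht + ‖α1‖^2 * d0 := by rw [vnormSq_smul', hh0sq]
  set Z := rankOne h x - rankOne h0 x0 with hZ
  have hZdec : Z = (1:ℂ) • rankOne ht xt + (conj α2 • rankOne ht x0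
      + (α1 • rankOne h0 xt + (α1 * conj α2 - 1) • rankOne h0 x0)) := by
    rw [hZ]; ext k j
    simp only [Matrix.sub_apply, Matrix.add_apply, Matrix.smul_apply, rankOne,
      Matrix.of_apply, smul_eq_mul, hht, hxt, map_sub, map_mul]
    ring
  have frobSq_master :
      frobSq Z = vnormSq ht * vnormSq xt + ‖α2‖^2 * (vnormSq ht * d0)
        + ‖α1‖^2 * (d0 * vnormSq xt) + ‖α1 * conj α2 - 1‖^2 * (d0 * d0) := by
    rw [hZdec, frobSq_add_of, frobSq_add_of, frobSq_add_of]
    · rw [frobSq_smul_rankOne, frobSq_smul_rankOne, frobSq_smul_rankOne,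
        frobSq_smul_rankOne, hh0sq, hx0sq, RCLike.norm_conj, norm_one, one_pow, one_mul]
      ring
    · rw [finner_smul_rankOne, xorth']; simp
    · rw [finner_add_right', finner_smul_rankOne, finner_smul_rankOne, horth']; simp
    · rw [finner_add_right', finner_add_right', finner_smul_rankOne,
        finner_smul_rankOne, finner_smul_rankOne, horth', xorth']; simp
  have hδZ : δ = frob Z / d0 := by rw [hδeq]; simp only [deltaI, hZ]
  have hfrobZ : frob Z = δ * d0 := by rw [hδZ]; field_simp
  have hδ0 : 0 ≤ δ := by
    rw [hδZ]; exact div_nonneg (Real.sqrt_nonneg _) hd0.le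
  have master : (δ * d0)^2 = vnormSq ht * vnormSq xt + ‖α2‖^2 * (vnormSq ht * d0)
      + ‖α1‖^2 * (d0 * vnormSq xt) + ‖α1 * conj α2 - 1‖^2 * (d0 * d0) := by
    rw [← hfrobZ, frob_sq']; exact frobSq_master
  clear hZdec frobSq_master
  rw [← vnorm_sq' ht, ← vnorm_sq' xt] at master
  rw [← vnorm_sq' x, ← vnorm_sq' xt] at hxsplit
  rw [← vnorm_sq' h, ← vnorm_sq' ht] at hhsplit
  have a0 : 0 ≤ vnorm ht := vnorm_nonneg' ht
  have b0 : 0 ≤ vnorm xt := vnorm_nonneg' xt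
  have H0 : 0 ≤ vnorm h := vnorm_nonneg' h
  have X0 : 0 ≤ vnorm x := vnorm_nonneg' x
  have A0 : (0:ℝ) ≤ ‖α1‖ := norm_nonneg _
  have B0 : (0:ℝ) ≤ ‖α2‖ := norm_nonneg _
  have t1 : 0 ≤ vnorm ht ^2 * vnorm xt ^2 := by positivity
  have t2 : 0 ≤ ‖α2‖^2 * (vnorm ht ^2 * d0) := by positivity
  have t3 : 0 ≤ ‖α1‖^2 * (d0 * vnorm xt ^2) := by positivity
  have t4 : 0 ≤ ‖α1 * conj α2 - 1‖^2 * (d0 * d0) := by positivity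
  -- Claim 2
  have claim2 : ‖α1 * conj α2 - 1‖ ≤ δ := by
    apply le_of_sq_le_sq' (norm_nonneg _) hδ0
    have hc : ‖α1 * conj α2 - 1‖^2 * (d0 * d0) ≤ (δ * d0)^2 := by linarith [master, t1, t2, t3]
    nlinarith [hc, mul_pos hd0 hd0]
  -- Claim 1
  have claim1 : ‖α1‖ ≤ vnorm h / vnorm h0 := by
    rw [hh0, le_div_iff₀ (Real.sqrt_pos.mpr hd0)]
    apply le_of_sq_le_sq' (mul_nonneg A0 (Real.sqrt_nonneg _)) H0
    have e : ‖α1‖^2 * Real.sqrt d0 ^ 2 = ‖α1‖^2 * d0 := by rw [Real.sq_sqrt hd0.le]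
    nlinarith [hhsplit, e, sq_nonneg (vnorm ht)]
  -- intermediate products
  have hx2m : vnorm ht ^2 * vnorm x ^2
      = vnorm ht ^2 * vnorm xt ^2 + ‖α2‖^2 * (vnorm ht ^2 * d0) := by
    linear_combination (vnorm ht ^2) * hxsplit
  have hh2m : vnorm xt ^2 * vnorm h ^2
      = vnorm ht ^2 * vnorm xt ^2 + ‖α1‖^2 * (d0 * vnorm xt ^2) := by
    linear_combination (vnorm xt ^2) * hhsplit
  have haX : vnorm ht * vnorm x ≤ δ * d0 := by
    apply le_of_sq_le_sq' (mul_nonneg a0 X0) (mul_nonneg hδ0 hd0.le)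
    nlinarith [master, hx2m, t3, t4]
  have hbH : vnorm xt * vnorm h ≤ δ * d0 := by
    apply le_of_sq_le_sq' (mul_nonneg b0 H0) (mul_nonneg hδ0 hd0.le)
    nlinarith [master, hh2m, t2, t4]
  have h12 : 1 - δ ≤ ‖α1‖ * ‖α2‖ := by
    have e1 : ‖α1 * conj α2‖ = ‖α1‖ * ‖α2‖ := by rw [norm_mul, RCLike.norm_conj]
    have h' := norm_sub_norm_le (1:ℂ) (α1 * conj α2)
    rw [norm_one, norm_sub_rev] at h'
    linarith [claim2, e1.symm.le, e1.le]
  have hHX2 : vnorm h ^2 * vnorm x ^2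
      = vnorm ht ^2 * vnorm xt ^2 + ‖α2‖^2 * (vnorm ht ^2 * d0)
        + ‖α1‖^2 * (d0 * vnorm xt ^2) + ‖α1‖^2 * ‖α2‖^2 * (d0 * d0) := by
    linear_combination (vnorm x ^2) * hhsplit + (vnorm ht ^2) * hxsplit
      + (‖α1‖^2 * d0) * hxsplit
  have hδ1 : (0:ℝ) < 1 - δ := by linarith
  have hlow : (1 - δ) * d0 ≤ vnorm h * vnorm x := by
    apply le_of_sq_le_sq' (mul_nonneg hδ1.le hd0.le) (mul_nonneg H0 X0)
    linarith [hHX2, t1, t2, t3,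
      mul_le_mul_of_nonneg_right (mul_self_le_mul_self hδ1.le h12) (mul_nonneg hd0.le hd0.le)]
  have hHXpos : 0 < vnorm h * vnorm x := lt_of_lt_of_le (mul_pos hδ1 hd0) hlow
  have hXpos : 0 < vnorm x := by
    rcases X0.lt_or_eq with hp | hp
    · exact hp
    · exfalso; rw [← hp, mul_zero] at hHXpos; exact lt_irrefl _ hHXpos
  have hHpos : 0 < vnorm h := by
    rcases H0.lt_or_eq with hp | hp
    · exact hp
    · exfalso; rw [← hp, zero_mul] at hHXpos; exact lt_irrefl _ hHXpos
  -- Claim 3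
  have claim3 : vnorm ht ≤ δ / (1 - δ) * vnorm h := by
    rw [div_mul_eq_mul_div, le_div_iff₀ hδ1]
    have step : (vnorm ht * (1 - δ)) * vnorm x ≤ (δ * vnorm h) * vnorm x := by
      linarith [mul_le_mul_of_nonneg_right haX hδ1.le,
        mul_le_mul_of_nonneg_left hlow hδ0]
    exact le_of_mul_le_mul_right step hXpos
  -- Claim 4
  have claim4 : vnorm xt ≤ δ / (1 - δ) * vnorm x := by
    rw [div_mul_eq_mul_div, le_div_iff₀ hδ1]
    have step : (vnorm xt * (1 - δ)) * vnorm h ≤ (δ * vnorm x) * vnorm h := by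
      linarith [mul_le_mul_of_nonneg_right hbH hδ1.le,
        mul_le_mul_of_nonneg_left hlow hδ0]
    exact le_of_mul_le_mul_right step hHpos
  -- Claim 5
  have claim5 : vnorm ht * vnorm xt ≤ δ^2 * d0 / (2 * (1 - δ)) := by
    rw [le_div_iff₀ (by linarith : (0:ℝ) < 2 * (1 - δ))]
    have amgm : 2 * (‖α1‖ * ‖α2‖) * (vnorm ht * vnorm xt) * d0
        ≤ ‖α2‖^2 * (vnorm ht ^2 * d0) + ‖α1‖^2 * (d0 * vnorm xt ^2) := by
      linarith [mul_nonneg hd0.le (sq_nonneg (‖α2‖ * vnorm ht - ‖α1‖ * vnorm xt))]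
    have upper : ‖α2‖^2 * (vnorm ht ^2 * d0) + ‖α1‖^2 * (d0 * vnorm xt ^2)
        ≤ (δ * d0)^2 := by linarith [master, t1, t4]
    have lower : 2 * (1 - δ) * (vnorm ht * vnorm xt) * d0
        ≤ 2 * (‖α1‖ * ‖α2‖) * (vnorm ht * vnorm xt) * d0 := by
      linarith [mul_le_mul_of_nonneg_right h12
        (mul_nonneg (mul_nonneg a0 b0) hd0.le)]
    have key : 2 * (1 - δ) * (vnorm ht * vnorm xt) * d0 ≤ δ^2 * (d0 * d0) := by
      linarith [amgm, upper, lower]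
    exact le_of_mul_le_mul_right (by linarith [key]) hd0
  -- Claim 6
  refine ⟨claim1, claim2, claim3, claim4, claim5, ?_⟩
  intro B μ hμ hhn hBh hBh0 l
  have h2 : ‖α1‖ ≤ 2 := by
    have hH2 : vnorm h * vnorm h ≤ 4 * d0 := by
      linarith [mul_self_le_mul_self H0 hhn, Real.sq_sqrt hd0.le]
    have hAd : ‖α1‖^2 * d0 ≤ 4 * d0 := by
      linarith [hhsplit, sq_nonneg (vnorm ht), hH2]
    exact le_of_sq_le_sq' A0 (by norm_num)
      (le_of_mul_le_mul_right (by linarith [hAd]) hd0)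
  have hlin : B.mulVec ht l = B.mulVec h l - α1 * B.mulVec h0 l := by
    simp only [Matrix.mulVec, dotProduct, hht, Finset.mul_sum]
    rw [← Finset.sum_sub_distrib]
    exact Finset.sum_congr rfl fun k _ => by ring
  have tri : ‖B.mulVec ht l‖ ≤ ‖B.mulVec h l‖ + ‖α1‖ * ‖B.mulVec h0 l‖ := by
    rw [hlin]
    refine (norm_sub_le _ _).trans ?_
    rw [norm_mul]
  have hs := mul_le_mul_of_nonneg_left tri (Real.sqrt_nonneg (L:ℝ))
  have hb0 : 0 ≤ Real.sqrt (L:ℝ) * ‖B.mulVec h0 l‖ :=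
    mul_nonneg (Real.sqrt_nonneg _) (norm_nonneg _)
  linarith [hs, hBh l, hBh0 l, hb0,
    mul_le_mul h2 (hBh0 l) hb0 (by norm_num : (0:ℝ) ≤ 2)]


end RGD
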